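/- For every x > 0, x·coth(x) = 1 + Σ_{n≥1} 2x² / (x² + π²n²). -/

import Mathlib

open Real Complex MeasureTheory Set intervalIntegral

lemma coshCoeff (x : ℝ) (hx : 0 < x) (n : ℤ) :
    fourierCoeffOn zero_lt_one (fun t : ℝ => (Real.cosh (2 * x * (t - 1/2)) : ℂ)) n
      = ((x * Real.sinh x / (x ^ 2 + π ^ 2 * n ^ 2) : ℝ) : ℂ) := by
  have hx0 : (x : ℂ) ≠ 0 := ofReal_ne_zero.mpr hx.ne'
  set c₁ : ℂ := 2 * x - 2 * π * I * n with hc₁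
  set c₂ : ℂ := -(2 * x) - 2 * π * I * n with hc₂
  have hc₁0 : c₁ ≠ 0 := by
    intro h
    have := congrArg Complex.re h
    simp [hc₁] at this
    exact hx.ne' (by linarith)
  have hc₂0 : c₂ ≠ 0 := by
    intro h
    have := congrArg Complex.re h
    simp [hc₂] at this
    exact hx.ne' (by linarith)
  rw [fourierCoeffOn_eq_integral]
  have hint : ∀ t : ℝ, t ∈ uIcc (0:ℝ) 1 →
      (fourier (-n) (t : AddCircle (1 - 0 : ℝ)) • (Real.cosh (2 * x * (t - 1/2)) : ℂ))
        = Complex.exp (-x) / 2 * Complex.exp (c₁ * t) + Complex.exp x / 2 * Complex.exp (c₂ * t) := by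
    intro t _
    have h1 : ((1:ℝ) - 0) = 1 := by norm_num
    rw [h1, fourier_coe_apply, smul_eq_mul, Real.cosh_eq]
    push_cast
    rw [show Complex.exp (-x) / 2 * Complex.exp (c₁ * t)
        = Complex.exp (-(x:ℂ) + c₁ * t) / 2 by rw [Complex.exp_add]; ring]
    rw [show Complex.exp (x:ℂ) / 2 * Complex.exp (c₂ * t)
        = Complex.exp ((x : ℂ) + c₂ * t) / 2 by rw [Complex.exp_add]; ring]
    rw [show (-(x:ℂ) + c₁ * t) = (2 * π * I * (-n) * t / 1) + (2 * x * (t - 1/2)) by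
      rw [hc₁]; ring]
    rw [show ((x : ℂ) + c₂ * t) = (2 * π * I * (-n) * t / 1) + (-(2 * x * (t - 1/2))) by
      rw [hc₂]; ring]
    rw [Complex.exp_add, Complex.exp_add]
    ring
  rw [intervalIntegral.integral_congr hint]
  rw [intervalIntegral.integral_add
      ((by fun_prop : Continuous fun t : ℝ => Complex.exp (-(x:ℂ)) / 2 * Complex.exp (c₁ * t)).intervalIntegrable _ _)
      ((by fun_prop : Continuous fun t : ℝ => Complex.exp (x:ℂ) / 2 * Complex.exp (c₂ * t)).intervalIntegrable _ _)]
  rw [intervalIntegral.integral_const_mul, intervalIntegral.integral_const_mul,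
    integral_exp_mul_complex hc₁0, integral_exp_mul_complex hc₂0]
  have e1 : Complex.exp (c₁ * ((1:ℝ):ℂ)) = Complex.exp (2 * x) := by
    rw [Complex.ofReal_one, mul_one, hc₁,
      show (2 * (x:ℂ) - 2 * π * I * n) = 2 * x + ((-n : ℤ) : ℂ) * (2 * π * I) by push_cast; ring,
      Complex.exp_add, Complex.exp_int_mul_two_pi_mul_I, mul_one]
  have e2 : Complex.exp (c₂ * ((1:ℝ):ℂ)) = Complex.exp (-(2 * x)) := by
    rw [Complex.ofReal_one, mul_one, hc₂,
      show (-(2 * (x:ℂ)) - 2 * π * I * n) = -(2 * x) + ((-n : ℤ) : ℂ) * (2 * π * I) by push_cast; ring,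
      Complex.exp_add, Complex.exp_int_mul_two_pi_mul_I, mul_one]
  rw [e1, e2, Complex.ofReal_zero, mul_zero, Complex.exp_zero]
  have E0 : Complex.exp (x : ℂ) ≠ 0 := Complex.exp_ne_zero _
  have en : Complex.exp (-(x:ℂ)) = (Complex.exp x)⁻¹ := Complex.exp_neg _
  have e2x : Complex.exp (2 * (x:ℂ)) = Complex.exp x * Complex.exp x := by
    rw [show 2 * (x:ℂ) = x + x by ring, Complex.exp_add]
  have e2xn : Complex.exp (-(2 * (x:ℂ))) = (Complex.exp x)⁻¹ * (Complex.exp x)⁻¹ := by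
    rw [show -(2 * (x:ℂ)) = -x + -x by ring, Complex.exp_add, en]
  have hden : ((x ^ 2 + π ^ 2 * (n:ℝ) ^ 2 : ℝ) : ℂ) ≠ 0 := by
    rw [ofReal_ne_zero]
    positivity
  rw [Real.sinh_eq]
  push_cast at hden ⊢
  rw [en, e2x, e2xn, hc₁, hc₂]
  have hI : Complex.I ^ 2 = -1 := Complex.I_sq
  have h₁ : (2 * (x:ℂ) - 2 * ↑π * I * ↑n) ≠ 0 := by rw [← hc₁]; exact hc₁0
  have h₂ : (-(2 * (x:ℂ)) - 2 * ↑π * I * ↑n) ≠ 0 := by rw [← hc₂]; exact hc₂0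
  field_simp [E0, hden, h₁, h₂]
  simp only [sub_zero, div_one, one_smul, mul_zero, Complex.exp_zero, mul_one]
  have ha : ((x:ℂ) - ↑π * I * ↑n) ≠ 0 := fun h => h₁ (by linear_combination 2 * h)
  have hb : (-(x:ℂ) - ↑π * I * ↑n) ≠ 0 := fun h => h₂ (by linear_combination 2 * h)
  field_simp
  linear_combination (2 * (x:ℂ) * (π:ℂ) ^ 2 * (n:ℂ) ^ 2 * (1 - Complex.exp (x:ℂ) ^ 2)) * hI

theorem stmt_6 (x : ℝ) (hx : 0 < x) :
    x * (Real.cosh x / Real.sinh x) =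
      1 + ∑' n : ℕ, 2 * x ^ 2 / (x ^ 2 + π ^ 2 * (n + 1) ^ 2) := by
  have hs : 0 < Real.sinh x := Real.sinh_pos_iff.mpr hx
  -- the real coefficient function
  set c : ℤ → ℝ := fun n => x * Real.sinh x / (x ^ 2 + π ^ 2 * n ^ 2) with hc
  -- summability
  have hsum : Summable c := by
    apply Summable.of_norm_bounded_eventually
      (g := fun n : ℤ => x * Real.sinh x / π ^ 2 * (1 / (n : ℝ) ^ 2))
      ((Real.summable_one_div_int_pow.2 one_lt_two).mul_left _)
    filter_upwards [Set.Finite.eventually_cofinite_notMem (Set.finite_singleton 0)] with n hn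
    simp only [Set.mem_singleton_iff] at hn
    have hn2 : (1 : ℝ) ≤ (n : ℝ) ^ 2 := by
      have : (1 : ℝ) ≤ |(n : ℝ)| := by
        rw [← Int.cast_abs]
        exact_mod_cast Int.one_le_abs (by simpa using hn)
      calc (1:ℝ) = 1 * 1 := by ring
        _ ≤ |(n:ℝ)| * |(n:ℝ)| := mul_le_mul this this zero_le_one (abs_nonneg _)
        _ = (n:ℝ) ^ 2 := by rw [← abs_mul, abs_mul_self, sq]
    have hpos : (0:ℝ) < x ^ 2 + π ^ 2 * n ^ 2 := by positivity
    simp only [hc, Real.norm_eq_abs]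
    rw [_root_.abs_of_nonneg (show (0:ℝ) ≤ x * Real.sinh x / (x ^ 2 + π ^ 2 * (n:ℝ) ^ 2) by positivity),
      div_mul_div_comm, mul_one]
    have hq : (0:ℝ) < π ^ 2 * (n:ℝ) ^ 2 := by nlinarith [Real.pi_pos]
    gcongr
    nlinarith [sq_nonneg x]
  -- periodized cosh function on the unit circle
  have hF : (fun t : ℝ => (Real.cosh (2 * x * (t - 1/2)) : ℂ)) 0
      = (fun t : ℝ => (Real.cosh (2 * x * (t - 1/2)) : ℂ)) 1 := by
    simp only []
    rw [show 2 * x * ((0:ℝ) - 1/2) = -x by ring, show 2 * x * ((1:ℝ) - 1/2) = x by ring,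
      Real.cosh_neg]
  let B : C(UnitAddCircle, ℂ) :=
    ContinuousMap.mk (AddCircle.liftIco 1 0 (fun t : ℝ => (Real.cosh (2 * x * (t - 1/2)) : ℂ)))
      (AddCircle.liftIco_zero_continuous hF (Complex.continuous_ofReal.comp
        (Real.continuous_cosh.comp (by fun_prop))).continuousOn)
  have step1 : ∀ n : ℤ, fourierCoeff B n = ((c n : ℝ) : ℂ) := by
    intro n
    have : fourierCoeff (⇑B) n = fourierCoeffOn
        (lt_add_of_pos_right (0:ℝ) one_pos) (fun t : ℝ => (Real.cosh (2 * x * (t - 1/2)) : ℂ)) n :=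
      fourierCoeff_liftIco_eq _ n
    rw [this]
    have h01 : fourierCoeffOn (lt_add_of_pos_right (0:ℝ) one_pos)
        (fun t : ℝ => (Real.cosh (2 * x * (t - 1/2)) : ℂ)) n
        = fourierCoeffOn zero_lt_one (fun t : ℝ => (Real.cosh (2 * x * (t - 1/2)) : ℂ)) n := by
      congr 1
      norm_num
    rw [h01, coshCoeff x hx n, hc]
  have hBsum : Summable (fourierCoeff B) := by
    apply Summable.congr ((Complex.summable_ofReal).mpr hsum)
    intro n
    exact (step1 n).symm
  have step2 := has_pointwise_sum_fourier_series_of_summable hBsum (0 : UnitAddCircle)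
  simp_rw [step1] at step2
  have hB0 : B (0 : UnitAddCircle) = (Real.cosh x : ℂ) := by
    rw [show (0 : UnitAddCircle) = (((0:ℝ) : UnitAddCircle)) from (QuotientAddGroup.mk_zero _).symm]
    show AddCircle.liftIco 1 0 (fun t : ℝ => (Real.cosh (2 * x * (t - 1/2)) : ℂ))
      (((0:ℝ) : UnitAddCircle)) = _
    rw [AddCircle.liftIco_coe_apply (by norm_num : (0:ℝ) ∈ Set.Ico (0:ℝ) (0 + 1))]
    rw [show 2 * x * ((0:ℝ) - 1/2) = -x by ring, Real.cosh_neg]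
  rw [hB0] at step2
  have hZ : HasSum c (Real.cosh x) := by
    rw [← Complex.hasSum_ofReal]
    convert step2 using 2 with n
    rw [fourier_eval_zero, smul_eq_mul, mul_one]
  -- fold ℤ to ℕ
  have hN := hZ.nat_add_neg
  have hceven : ∀ n : ℕ, c n + c (-n) = 2 * (x * Real.sinh x) / (x ^ 2 + π ^ 2 * n ^ 2) := by
    intro n
    simp only [hc, Int.cast_neg, Int.cast_natCast, neg_sq]
    ring
  have hc0 : c 0 = Real.sinh x / x := by
    simp only [hc, Int.cast_zero]
    rw [show (0:ℝ)^2 = 0 by ring]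
    field_simp
    ring
  rw [hc0] at hN
  have hN' : HasSum (fun n : ℕ => 2 * (x * Real.sinh x) / (x ^ 2 + π ^ 2 * (n:ℝ) ^ 2))
      (Real.cosh x + Real.sinh x / x) := hN.congr_fun (fun n => (hceven n).symm)
  have hN1 : HasSum (fun n : ℕ => 2 * (x * Real.sinh x) / (x ^ 2 + π ^ 2 * ((n:ℝ) + 1) ^ 2))
      (Real.cosh x + Real.sinh x / x - 2 * (x * Real.sinh x) / (x ^ 2 + π ^ 2 * ((0:ℕ):ℝ) ^ 2)) := by
    have := (hasSum_nat_add_iff' (f := fun n : ℕ => 2 * (x * Real.sinh x) / (x ^ 2 + π ^ 2 * (n:ℝ) ^ 2)) 1).mpr hN'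
    simp only [Finset.range_one, Finset.sum_singleton] at this
    simpa only [Nat.cast_add, Nat.cast_one] using this
  simp only [Nat.cast_zero] at hN1
  rw [show (0:ℝ)^2 = 0 by ring, mul_zero, add_zero] at hN1
  have hx2 : x ^ 2 ≠ 0 := by positivity
  have hval : Real.cosh x + Real.sinh x / x - 2 * (x * Real.sinh x) / x ^ 2
      = Real.cosh x - Real.sinh x / x := by
    field_simp
    ring
  rw [hval] at hN1
  have hfin := hN1.mul_left (x / Real.sinh x)
  have hterm : ∀ n : ℕ, x / Real.sinh x * (2 * (x * Real.sinh x) / (x ^ 2 + π ^ 2 * ((n:ℝ) + 1) ^ 2))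
      = 2 * x ^ 2 / (x ^ 2 + π ^ 2 * ((n:ℝ) + 1) ^ 2) := by
    intro n
    have hden : x ^ 2 + π ^ 2 * ((n:ℝ) + 1) ^ 2 ≠ 0 := by positivity
    field_simp
  have hfin' : HasSum (fun n : ℕ => 2 * x ^ 2 / (x ^ 2 + π ^ 2 * ((n:ℝ) + 1) ^ 2))
      (x / Real.sinh x * (Real.cosh x - Real.sinh x / x)) := hfin.congr_fun (fun n => (hterm n).symm)
  rw [hfin'.tsum_eq]
  field_simp
  ring
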